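/- arXiv:math/0702551 — 2 statements merged into one kernel-verified Lean document; each statement's English description precedes it below -/
import Mathlib

section
/- Let $X_1, X_2, \ldots$ be iid nonnegative random variables with distribution function $F$ whose tail is regularly varying with index $-\alpha$ ($\alpha > 0$), and let $X_{(1)} \ge \cdots \ge X_{(n)}$ be the order statistics of the first $n$ in decreasing order. Let $k = k(n) \to \infty$ with $k/n \to 0$, and fix $M > 0$. Define $k^M := \#\{j : 1 \le j \le k,\ j \ge k e^{-M},\ \log(X_{(j)}/X_{(k)}) \le 2M/\alpha\}$ (the number of points of the normalized QQ plot lying in $[0,M] \times [0, 2M/\alpha]$). Then $k^M / k$ converges in probability to $1 - e^{-M}$ as $n \to \infty$. -/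
open MeasureTheory Filter Set ProbabilityTheory

/-- `ord n j ω` (for `1 ≤ j ≤ n`) is the `j`-th largest among `X 1 ω, …, X n ω`:
decreasing in `j`, and a rearrangement of the first `n` sample values. -/
def IsDecOrderStat {Ω : Type*} (X : ℕ → Ω → ℝ) (ord : ℕ → ℕ → Ω → ℝ) : Prop :=
  ∀ ω n, (∀ i j, 1 ≤ i → i ≤ j → j ≤ n → ord n j ω ≤ ord n i ω) ∧
    ∃ σ : Equiv.Perm (Fin n), ∀ i : Fin n, ord n (i.1 + 1) ω = X ((σ i).1 + 1) ω

/-- The distribution function `F` has a regularly varying tail with index `-α`: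
`1 - F(x) = x^{-α} L(x)` with `L` slowly varying. -/
def RegVaryingTail (F : ℝ → ℝ) (α : ℝ) : Prop :=
  ∃ L : ℝ → ℝ, (∀ x > (0:ℝ), 1 - F x = x ^ (-α) * L x) ∧
    ∀ x > (0:ℝ), Tendsto (fun t => L (t * x) / L t) atTop (nhds 1)

lemma aux_card_filter_perm {n : ℕ} (σ : Equiv.Perm (Fin n)) (Q : Fin n → Prop) [DecidablePred Q] :
    (Finset.univ.filter (fun i => Q (σ i))).card = (Finset.univ.filter Q).card := by
  apply Finset.card_bij (fun a _ => σ a)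
  · intro a ha; simp_all
  · intro a ha b hb hab; exact σ.injective hab
  · intro b hb; exact ⟨σ.symm b, by simp_all, by simp⟩

lemma aux_card_filter_Icc_fin (n : ℕ) (P : ℕ → Prop) [DecidablePred P] :
    ((Finset.Icc 1 n).filter P).card = (Finset.univ.filter (fun i : Fin n => P (i.1 + 1))).card := by
  apply Finset.card_bij (fun (a : ℕ) (ha : a ∈ (Finset.Icc 1 n).filter P) =>
    (⟨a - 1, by simp only [Finset.mem_filter, Finset.mem_Icc] at ha; omega⟩ : Fin n))
  · intro a ha
    simp only [Finset.mem_filter, Finset.mem_Icc] at ha ⊢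
    refine ⟨Finset.mem_univ _, ?_⟩
    have h2 : a - 1 + 1 = a := by omega
    rw [h2]; exact ha.2
  · intro a ha b hb hab
    simp only [Finset.mem_filter, Finset.mem_Icc] at ha hb
    have := congrArg Fin.val hab
    simp at this; omega
  · intro b hb
    simp only [Finset.mem_filter, Finset.mem_univ, true_and] at hb
    refine ⟨b.1 + 1, ?_, ?_⟩
    · simp only [Finset.mem_filter, Finset.mem_Icc]
      exact ⟨⟨by omega, by omega⟩, hb⟩
    · ext; simp

lemma aux_card_ord_eq {Ω : Type*} {X : ℕ → Ω → ℝ} {ord : ℕ → ℕ → Ω → ℝ}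
    (hord : IsDecOrderStat X ord) (ω : Ω) (n : ℕ) (b : ℝ) :
    ((Finset.Icc 1 n).filter (fun i => b < ord n i ω)).card
      = ((Finset.Icc 1 n).filter (fun i => b < X i ω)).card := by
  obtain ⟨σ, hσ⟩ := (hord ω n).2
  rw [aux_card_filter_Icc_fin n (fun i => b < ord n i ω),
    aux_card_filter_Icc_fin n (fun i => b < X i ω)]
  have : (Finset.univ.filter (fun i : Fin n => b < ord n (i.1 + 1) ω))
      = (Finset.univ.filter (fun i : Fin n => b < X ((σ i).1 + 1) ω)) := by
    apply Finset.filter_congr; intro i _; rw [hσ i]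
  rw [this]
  exact aux_card_filter_perm σ (fun i : Fin n => b < X (i.1 + 1) ω)

lemma aux_ord_gt_iff {Ω : Type*} {X : ℕ → Ω → ℝ} {ord : ℕ → ℕ → Ω → ℝ}
    (hord : IsDecOrderStat X ord) (ω : Ω) {n j : ℕ} (hj1 : 1 ≤ j) (hjn : j ≤ n) (b : ℝ) :
    b < ord n j ω ↔ j ≤ ((Finset.Icc 1 n).filter (fun i => b < X i ω)).card := by
  rw [← aux_card_ord_eq hord ω n b]
  set A := (Finset.Icc 1 n).filter (fun i => b < ord n i ω) with hA
  constructor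
  · intro h
    have hsub : Finset.Icc 1 j ⊆ A := by
      intro i hi
      simp only [Finset.mem_Icc] at hi
      simp only [hA, Finset.mem_filter, Finset.mem_Icc]
      exact ⟨⟨hi.1, le_trans hi.2 hjn⟩, lt_of_lt_of_le h ((hord ω n).1 i j hi.1 hi.2 hjn)⟩
    calc j = (Finset.Icc 1 j).card := by rw [Nat.card_Icc]; omega
    _ ≤ A.card := Finset.card_le_card hsub
  · intro h
    by_contra hcon
    push_neg at hcon
    have hsub : A ⊆ Finset.Icc 1 (j - 1) := by
      intro a ha
      simp only [hA, Finset.mem_filter, Finset.mem_Icc] at ha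
      simp only [Finset.mem_Icc]
      refine ⟨ha.1.1, ?_⟩
      by_contra hc
      push_neg at hc
      have hja : j ≤ a := by omega
      have := (hord ω n).1 j a hj1 hja ha.1.2
      exact absurd (lt_of_lt_of_le ha.2 this) (not_lt.2 hcon)
    have := Finset.card_le_card hsub
    rw [Nat.card_Icc] at this
    omega

lemma aux_count_cheb {Ω : Type*} [MeasurableSpace Ω] (μ : Measure Ω) [IsProbabilityMeasure μ]
    (X : ℕ → Ω → ℝ) (F : ℝ → ℝ)
    (hmeas : ∀ i, Measurable (X i))
    (hindep : iIndepFun X μ)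
    (hcdf : ∀ i x, (μ {ω | X i ω ≤ x}).toReal = F x)
    (n : ℕ) (b : ℝ) (a : ℝ) (ha : 0 < a) :
    μ {ω | a ≤ |((((Finset.Icc 1 n).filter (fun i => b < X i ω)).card : ℝ))
        - (n : ℝ) * (1 - F b)|} ≤ ENNReal.ofReal ((n : ℝ) * (1 - F b) / a ^ 2) := by
  classical
  set g : ℝ → ℝ := (Set.Ioi b).indicator (fun _ => (1:ℝ)) with hg
  have hgmeas : Measurable g := measurable_const.indicator measurableSet_Ioi
  set Y : ℕ → Ω → ℝ := fun i => g ∘ X i with hY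
  have hsetmeas : ∀ i, MeasurableSet {ω | b < X i ω} := fun i => (hmeas i) measurableSet_Ioi
  have hYind : ∀ i ω, Y i ω = Set.indicator {ω | b < X i ω} (fun _ => (1:ℝ)) ω := by
    intro i ω
    simp only [hY, hg, Function.comp_apply, Set.indicator, Set.mem_Ioi, Set.mem_setOf_eq]
  have hYmem : ∀ i, MemLp (Y i) 2 μ := by
    intro i
    have h0 := memLp_indicator_const (μ := μ) 2 (hsetmeas i) (1:ℝ) (Or.inr (measure_ne_top μ _))
    have h1 : Y i = Set.indicator {ω | b < X i ω} (fun _ => (1:ℝ)) := funext (hYind i)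
    rw [h1]; exact h0
  have hprob : ∀ i, (μ {ω | b < X i ω}).toReal = 1 - F b := by
    intro i
    have hcompl : {ω | b < X i ω} = {ω | X i ω ≤ b}ᶜ := by
      ext ω; simp [not_le]
    have hms : MeasurableSet {ω | X i ω ≤ b} := (hmeas i) measurableSet_Iic
    rw [hcompl, measure_compl hms (measure_ne_top μ _),
      measure_univ, ENNReal.toReal_sub_of_le prob_le_one ENNReal.one_ne_top,
      ENNReal.toReal_one, hcdf i b]
  have hEY : ∀ i, μ[Y i] = 1 - F b := by
    intro i
    have : μ[Y i] = ∫ ω, Set.indicator {ω | b < X i ω} (fun _ => (1:ℝ)) ω ∂μ :=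
      integral_congr_ae (ae_of_all μ (fun ω => hYind i ω))
    rw [this, integral_indicator_const (1:ℝ) (hsetmeas i), smul_eq_mul, mul_one]; exact hprob i
  set S : Ω → ℝ := ∑ i ∈ Finset.Icc 1 n, Y i with hS
  have hSmem : MemLp S 2 μ := memLp_finset_sum' _ (fun i _ => hYmem i)
  have hScard : ∀ ω, S ω = (((Finset.Icc 1 n).filter (fun i => b < X i ω)).card : ℝ) := by
    intro ω
    rw [hS]
    rw [Finset.sum_apply]
    rw [← Finset.sum_boole]
    apply Finset.sum_congr rfl
    intro i _
    simp [hYind i ω, Set.indicator, Set.mem_setOf_eq]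
  have hES : μ[S] = (n : ℝ) * (1 - F b) := by
    rw [hS]
    have : ∫ ω, (∑ i ∈ Finset.Icc 1 n, Y i) ω ∂μ = ∑ i ∈ Finset.Icc 1 n, μ[Y i] := by
      simp only [Finset.sum_apply]
      exact integral_finset_sum _ (fun i _ => (hYmem i).integrable one_le_two)
    rw [this]
    rw [Finset.sum_congr rfl (fun i _ => hEY i), Finset.sum_const, Nat.card_Icc]
    simp
  have hYindep : iIndepFun Y μ :=
    hindep.comp (fun _ => g) (fun _ => hgmeas)
  have hVarY : ∀ i, variance (Y i) μ ≤ 1 - F b := by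
    intro i
    have hsq : ∀ ω, Y i ω ^ 2 = Y i ω := by
      intro ω; rw [hYind i ω]; by_cases h : b < X i ω <;> simp [Set.indicator, h]
    have h1 : variance (Y i) μ = μ[(Y i) ^ 2] - μ[Y i] ^ 2 := variance_eq_sub (hYmem i)
    have h2 : μ[(Y i) ^ 2] = μ[Y i] := by
      apply integral_congr_ae (ae_of_all μ _)
      intro ω; simp only [Pi.pow_apply]; exact hsq ω
    rw [h1, h2, hEY i]
    nlinarith [sq_nonneg (1 - F b)]
  have hVarS : variance S μ ≤ (n : ℝ) * (1 - F b) := by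
    rw [hS, IndepFun.variance_sum (fun i _ => hYmem i)
      (fun i _ j _ hij => hYindep.indepFun hij)]
    calc ∑ i ∈ Finset.Icc 1 n, variance (Y i) μ ≤ ∑ i ∈ Finset.Icc 1 n, (1 - F b) :=
          Finset.sum_le_sum (fun i _ => hVarY i)
      _ = (n : ℝ) * (1 - F b) := by rw [Finset.sum_const, Nat.card_Icc]; simp
  have hcheb := meas_ge_le_variance_div_sq (μ := μ) hSmem ha
  have hsetEq : {ω | a ≤ |(((Finset.Icc 1 n).filter (fun i => b < X i ω)).card : ℝ)
        - (n : ℝ) * (1 - F b)|} = {ω | a ≤ |S ω - μ[S]|} := by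
    ext ω
    simp only [Set.mem_setOf_eq, hScard ω, hES]
  rw [hsetEq]
  refine le_trans hcheb (ENNReal.ofReal_le_ofReal ?_)
  gcongr

lemma aux_exp_rpow (s r : ℝ) : Real.exp s ^ (r : ℝ) = Real.exp (s * r) := by
  rw [Real.rpow_def_of_pos (Real.exp_pos s), Real.log_exp]


set_option maxHeartbeats 2000000 in
/-- For iid nonnegative `X i` with regularly varying tail of index
`-α`, `k n → ∞`, `k n / n → 0`, and fixed `M > 0`, the number `kᴹ` of indices
`1 ≤ j ≤ k` with `j ≥ k e^{-M}` and `log(X_{(j)}/X_{(k)}) ≤ 2M/α` (points of the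
normalized QQ plot in `[0,M] × [0, 2M/α]`) satisfies `kᴹ/k → 1 - e^{-M}` in
probability. -/
theorem truncated_count_tendstoInProb {Ω : Type*} [MeasurableSpace Ω]
    (μ : Measure Ω) [IsProbabilityMeasure μ]
    (X : ℕ → Ω → ℝ) (F : ℝ → ℝ) (α : ℝ) (hα : 0 < α)
    (ord : ℕ → ℕ → Ω → ℝ) (k : ℕ → ℕ) (M : ℝ) (hM : 0 < M)
    (hmeas : ∀ i, Measurable (X i))
    (hindep : iIndepFun X μ)
    (hnonneg : ∀ i ω, 0 ≤ X i ω)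
    (hcdf : ∀ i x, (μ {ω | X i ω ≤ x}).toReal = F x)
    (hrv : RegVaryingTail F α)
    (hord : IsDecOrderStat X ord)
    (hk : Tendsto k atTop atTop)
    (hkn : Tendsto (fun n => (k n : ℝ) / (n : ℝ)) atTop (nhds 0)) :
    ∀ η > (0:ℝ),
      Tendsto (fun n => μ {ω | η <
        |(((Finset.Icc 1 (k n)).filter (fun j : ℕ =>
              (k n : ℝ) * Real.exp (-M) ≤ (j : ℝ) ∧
              Real.log (ord n j ω / ord n (k n) ω) ≤ 2 * M / α)).card : ℝ) / (k n : ℝ) -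
          (1 - Real.exp (-M))|})
        atTop (nhds 0) := by
  classical
  obtain ⟨L, hL1, hL2⟩ := hrv
  set R : ℝ → ℝ := fun x => 1 - F x with hRdef
  have hexpM1 : Real.exp (-M) < 1 := by
    rw [← Real.exp_zero]; exact Real.exp_lt_exp.2 (by linarith)
  -- basic facts about F and R
  have hF01 : ∀ x, 0 ≤ F x ∧ F x ≤ 1 := by
    intro x
    rw [← hcdf 1 x]
    refine ⟨ENNReal.toReal_nonneg, ?_⟩
    have h := prob_le_one (μ := μ) (s := {ω | X 1 ω ≤ x})
    simpa using ENNReal.toReal_mono ENNReal.one_ne_top h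
  have hFmono : Monotone F := by
    intro x y hxy
    rw [← hcdf 1 x, ← hcdf 1 y]
    exact ENNReal.toReal_mono (measure_ne_top μ _)
      (measure_mono (fun ω hω => le_trans hω hxy))
  have hRanti : Antitone R := fun x y hxy => by
    simp only [hRdef]; linarith [hFmono hxy]
  have hRnonneg : ∀ x, 0 ≤ R x := fun x => by
    simp only [hRdef]; linarith [(hF01 x).2]
  have hLR : ∀ x > (0:ℝ), R x = x ^ (-α) * L x := hL1
  have hLevent : ∀ᶠ t in atTop, 0 < L t ∧ 0 < t := by
    have h1 := hL2 1 one_pos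
    have h2 : ∀ᶠ t in atTop, 0 < L (t * 1) / L t := h1.eventually_const_lt one_pos
    filter_upwards [h2, eventually_gt_atTop (0:ℝ)] with t ht htpos
    rw [mul_one] at ht
    have hL0 : L t ≠ 0 := by
      intro h0; rw [h0] at ht; simp at ht
    have hrt := hLR t htpos
    have hpow : (0:ℝ) < t ^ (-α) := Real.rpow_pos_of_pos htpos _
    have hLnn : 0 ≤ L t := by
      by_contra hc; push_neg at hc
      nlinarith [hRnonneg t]
    exact ⟨lt_of_le_of_ne hLnn (Ne.symm hL0), htpos⟩
  have hRpos : ∀ x, 0 < R x := by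
    obtain ⟨t0, ht0⟩ := eventually_atTop.mp hLevent
    set t1 := max t0 1 with ht1def
    have ht1 := ht0 t1 (le_max_left _ _)
    have hRt1 : 0 < R t1 := by
      rw [hLR t1 ht1.2]
      exact mul_pos (Real.rpow_pos_of_pos ht1.2 _) ht1.1
    intro x
    rcases le_or_gt x t1 with h | h
    · exact lt_of_lt_of_le hRt1 (hRanti h)
    · have hx := ht0 x (le_trans (le_max_left _ _) h.le)
      rw [hLR x hx.2]
      exact mul_pos (Real.rpow_pos_of_pos hx.2 _) hx.1
  have hRsmall : ∀ ε > (0:ℝ), ∃ y : ℝ, R y < ε := by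
    have hsets : Monotone (fun m : ℕ => {ω | X 1 ω ≤ (m:ℝ)}) := by
      intro i j hij ω hω
      simp only [Set.mem_setOf_eq] at hω ⊢
      exact le_trans hω (by exact_mod_cast hij)
    have hU : (⋃ m : ℕ, {ω | X 1 ω ≤ (m:ℝ)}) = Set.univ := by
      ext ω
      simp only [Set.mem_iUnion, Set.mem_setOf_eq, Set.mem_univ, iff_true]
      exact exists_nat_ge (X 1 ω)
    have h1 := tendsto_measure_iUnion_atTop (μ := μ) hsets
    rw [hU, measure_univ] at h1
    have h2 := (ENNReal.tendsto_toReal ENNReal.one_ne_top).comp h1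
    simp only [ENNReal.toReal_one] at h2
    have h3 : Tendsto (fun m : ℕ => F (m:ℝ)) atTop (nhds 1) := by
      refine h2.congr (fun m => ?_)
      exact hcdf 1 (m:ℝ)
    intro ε hε
    have h4 : ∀ᶠ m : ℕ in atTop, 1 - ε < F (m:ℝ) :=
      h3.eventually_const_lt (by linarith)
    obtain ⟨m, hm⟩ := h4.exists
    exact ⟨(m:ℝ), by simp only [hRdef]; linarith⟩
  have hRV : ∀ x, 0 < x → Tendsto (fun t => R (t * x) / R t) atTop (nhds (x ^ (-α))) := by
    intro x hx
    have hmain := (hL2 x hx).const_mul (x ^ (-α))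
    rw [mul_one] at hmain
    refine Tendsto.congr' ?_ hmain
    filter_upwards [hLevent] with t ht
    obtain ⟨hLt, htpos⟩ := ht
    have htx : (0:ℝ) < t * x := mul_pos htpos hx
    have hLtx := hLR (t * x) htx
    have hLt' := hLR t htpos
    rw [hLtx, hLt', Real.mul_rpow htpos.le hx.le]
    have hp : t ^ (-α) ≠ 0 := (Real.rpow_pos_of_pos htpos _).ne'
    field_simp
  -- the sequence of thresholds
  set T : ℕ → ℝ := fun n => Real.exp M * (k n) / n with hTdef
  set b : ℕ → ℝ := fun n => sInf {x | R x < T n} with hbdef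
  have hkR : Tendsto (fun n => (k n : ℝ)) atTop atTop :=
    tendsto_natCast_atTop_atTop.comp hk
  have hkle : ∀ᶠ n : ℕ in atTop, k n ≤ n := by
    filter_upwards [hkn.eventually_lt_const one_pos, eventually_ge_atTop 1] with n h1 h2
    by_contra hc
    push_neg at hc
    have hn0 : (0:ℝ) < n := by exact_mod_cast h2
    have h3 : (1:ℝ) ≤ (k n:ℝ) / (n:ℝ) := by
      rw [le_div_iff₀ hn0, one_mul]
      exact_mod_cast hc.le
    linarith
  have hT0 : Tendsto T atTop (nhds 0) := by
    have h1 := hkn.const_mul (Real.exp M)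
    rw [mul_zero] at h1
    refine h1.congr (fun n => ?_)
    simp only [hTdef, mul_div_assoc]
  have hTpos : ∀ᶠ n : ℕ in atTop, 0 < T n := by
    filter_upwards [hk.eventually_ge_atTop 1, eventually_ge_atTop 1] with n h1 h2
    have hk0 : (0:ℝ) < k n := by exact_mod_cast h1
    have hn0 : (0:ℝ) < n := by exact_mod_cast h2
    simp only [hTdef]
    positivity
  have hbne : ∀ᶠ n : ℕ in atTop, {x | R x < T n}.Nonempty := by
    filter_upwards [hTpos] with n h
    obtain ⟨y, hy⟩ := hRsmall _ h
    exact ⟨y, hy⟩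
  have hblb : ∀ A : ℝ, ∀ᶠ n : ℕ in atTop, A ≤ b n := by
    intro A
    filter_upwards [hbne, hT0.eventually_lt_const (hRpos A)] with n hne hlt
    refine le_csInf hne (fun s hs => ?_)
    by_contra hc
    push_neg at hc
    simp only [Set.mem_setOf_eq] at hs
    exact absurd (lt_trans hs hlt) (not_lt.2 (hRanti hc.le))
  have hbtop : Tendsto b atTop atTop := tendsto_atTop.2 hblb
  have hbdd : ∀ᶠ n : ℕ in atTop, BddBelow {x | R x < T n} := by
    filter_upwards [hT0.eventually_lt_const (hRpos 0)] with n h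
    refine ⟨0, fun s hs => ?_⟩
    simp only [Set.mem_setOf_eq] at hs
    by_contra hc
    push_neg at hc
    exact absurd (lt_trans hs h) (not_lt.2 (hRanti hc.le))
  have hbge : ∀ᶠ n : ℕ in atTop, ∀ y, y < b n → T n ≤ R y := by
    filter_upwards [hbdd] with n hb y hy
    by_contra hc
    push_neg at hc
    exact absurd (csInf_le hb hc) (not_le.2 hy)
  have hblt : ∀ᶠ n : ℕ in atTop, ∀ y, b n < y → R y < T n := by
    filter_upwards [hbne] with n hne y hy
    obtain ⟨s, hs, hsy⟩ := exists_lt_of_csInf_lt hne hy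
    exact lt_of_le_of_lt (hRanti hsy.le) hs
  
  -- main statement for small η
  have main : ∀ η : ℝ, 0 < η → η ≤ (1 - Real.exp (-M)) / 2 →
      Tendsto (fun n => μ {ω | η <
        |(((Finset.Icc 1 (k n)).filter (fun j : ℕ =>
              (k n : ℝ) * Real.exp (-M) ≤ (j : ℝ) ∧
              Real.log (ord n j ω / ord n (k n) ω) ≤ 2 * M / α)).card : ℝ) / (k n : ℝ) -
          (1 - Real.exp (-M))|})
        atTop (nhds 0) := by
    intro η hη hη2
    set δ : ℝ := η * Real.exp M / 4 with hδdef
    have hδ : 0 < δ := by rw [hδdef]; positivity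
    set d0 : ℝ := Real.exp (M / (2 * α)) with hd0def
    have hd0 : 1 < d0 := by
      rw [hd0def, ← Real.exp_zero]
      exact Real.exp_lt_exp.2 (by positivity)
    have hd0pos : 0 < d0 := lt_trans one_pos hd0
    set x1 : ℝ := (1 + δ) ^ (α⁻¹ : ℝ) with hx1def
    have hx1 : 1 < x1 := by
      rw [hx1def, Real.one_lt_rpow_iff_of_pos (by linarith)]
      exact Or.inl ⟨by linarith, by positivity⟩
    have hx1pos : 0 < x1 := lt_trans one_pos hx1
    have hx1pow : x1 ^ (-α : ℝ) = (1 + δ)⁻¹ := by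
      rw [hx1def, ← Real.rpow_mul (by linarith : (0:ℝ) ≤ 1 + δ),
        show (α⁻¹ * -α) = (-1 : ℝ) by field_simp]
      exact Real.rpow_neg_one _
    have hd0pow : d0 ^ (-α : ℝ) = Real.exp (-(M/2)) := by
      rw [hd0def, aux_exp_rpow]
      congr 1
      field_simp
    -- three ratio limits along b
    have hL1lim : Tendsto (fun n => R (b n) / R (b n / d0)) atTop
        (nhds (Real.exp (-(M/2)))) := by
      have hcomp : Tendsto (fun n => b n / d0) atTop atTop := hbtop.atTop_div_const hd0pos
      have h1 := (hRV d0 hd0pos).comp hcomp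
      rw [hd0pow] at h1
      refine h1.congr (fun n => ?_)
      simp only [Function.comp_apply]
      rw [div_mul_cancel₀ _ (ne_of_gt hd0pos)]
    have hL2lim : Tendsto (fun n => R (b n) / R (b n * x1)) atTop (nhds (1 + δ)) := by
      have h1 := ((hRV x1 hx1pos).comp hbtop).inv₀ (by rw [hx1pow]; positivity)
      rw [hx1pow, inv_inv] at h1
      refine h1.congr (fun n => ?_)
      simp only [Function.comp_apply]
      rw [inv_div]
    have hL3lim : Tendsto (fun n => R (b n * Real.exp (2 * M / α)) / R (b n * x1)) atTop
        (nhds (Real.exp (-(2*M)) * (1 + δ))) := by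
      set f : ℝ := Real.exp (2 * M / α) / x1 with hfdef
      have hfpos : 0 < f := by rw [hfdef]; positivity
      have hcomp : Tendsto (fun n => b n * x1) atTop atTop := hbtop.atTop_mul_const hx1pos
      have h1 := (hRV f hfpos).comp hcomp
      have hflim : f ^ (-α : ℝ) = Real.exp (-(2*M)) * (1 + δ) := by
        rw [hfdef, Real.div_rpow (Real.exp_pos _).le hx1pos.le, aux_exp_rpow, hx1pow,
          show (2*M/α * -α) = (-(2*M)) by field_simp]
        field_simp
      rw [hflim] at h1
      refine h1.congr (fun n => ?_)
      simp only [Function.comp_apply]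
      congr 2
      rw [hfdef, mul_assoc]
      congr 1
      field_simp
    -- eventual lower/upper bounds for expected counts
    set lam : ℝ := Real.exp M * ((Real.exp (-(M/2)) + Real.exp (-M)) / 2) with hlamdef
    have e1 : Real.exp M * Real.exp (-(M/2)) = Real.exp (M/2) := by
      rw [← Real.exp_add]; ring_nf
    have e2 : Real.exp M * Real.exp (-M) = 1 := by
      rw [← Real.exp_add]; simp
    have e3 : 1 < Real.exp (M/2) := by
      rw [← Real.exp_zero]; exact Real.exp_lt_exp.2 (by linarith)
    have hlamgt : 1 < lam := by
      have hl : lam = (Real.exp (M/2) + 1) / 2 := by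
        rw [hlamdef]; linear_combination (1/2) * e1 + (1/2) * e2
      rw [hl]; linarith
    have hlam1pos : 0 < (Real.exp (-(M/2)) + Real.exp (-M)) / 2 := by positivity
    have hlam1lt : (Real.exp (-(M/2)) + Real.exp (-M)) / 2 < Real.exp (-(M/2)) := by
      have : Real.exp (-M) < Real.exp (-(M/2)) := Real.exp_lt_exp.2 (by linarith)
      linarith
    have hB1 : ∀ᶠ n : ℕ in atTop, lam * (k n : ℝ) ≤ (n : ℝ) * R (b n) := by
      filter_upwards [hL1lim.eventually_const_lt hlam1lt, hbge, hblb 1, hTpos,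
        eventually_ge_atTop 1] with n h1 h2 h3 h4 h5
      have hbpos : 0 < b n := lt_of_lt_of_le one_pos h3
      have h6 : T n ≤ R (b n / d0) := h2 _ (div_lt_self hbpos hd0)
      have h7 : 0 < R (b n / d0) := hRpos _
      have h8 : (Real.exp (-(M/2)) + Real.exp (-M)) / 2 * R (b n / d0) < R (b n) :=
        (lt_div_iff₀ h7).1 h1
      have h9 : (Real.exp (-(M/2)) + Real.exp (-M)) / 2 * T n ≤ R (b n) :=
        le_trans (mul_le_mul_of_nonneg_left h6 hlam1pos.le) h8.le
      have hn0 : (0:ℝ) < n := by exact_mod_cast h5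
      have h10 : lam * (k n : ℝ) = (n:ℝ) * ((Real.exp (-(M/2)) + Real.exp (-M)) / 2 * T n) := by
        simp only [hTdef, hlamdef]
        field_simp
      rw [h10]
      exact mul_le_mul_of_nonneg_left h9 hn0.le
    have hB2 : ∀ᶠ n : ℕ in atTop,
        (n : ℝ) * R (b n) ≤ (Real.exp M * (2 + δ)) * (k n : ℝ) := by
      filter_upwards [hL2lim.eventually_lt_const (show (1:ℝ) + δ < 2 + δ by linarith),
        hblt, hblb 1, hTpos, eventually_ge_atTop 1] with n h1 h2 h3 h4 h5
      have hbpos : 0 < b n := lt_of_lt_of_le one_pos h3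
      have h6 : R (b n * x1) < T n := h2 _ (lt_mul_of_one_lt_right hbpos hx1)
      have h7 : 0 < R (b n * x1) := hRpos _
      have h8 : R (b n) / T n ≤ R (b n) / R (b n * x1) := by
        gcongr
        exact hRnonneg _
      have h9 : R (b n) / T n < 2 + δ := lt_of_le_of_lt h8 h1
      have h10 : R (b n) < (2 + δ) * T n := (div_lt_iff₀ h4).1 h9
      have hn0 : (0:ℝ) < n := by exact_mod_cast h5
      have h11 : (n:ℝ) * ((2 + δ) * T n) = (Real.exp M * (2 + δ)) * (k n : ℝ) := by
        simp only [hTdef]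
        field_simp
      calc (n : ℝ) * R (b n) ≤ (n:ℝ) * ((2 + δ) * T n) :=
            mul_le_mul_of_nonneg_left h10.le hn0.le
        _ = _ := h11
    have hB3 : ∀ᶠ n : ℕ in atTop,
        (n : ℝ) * R (b n * Real.exp (2 * M / α))
          ≤ (Real.exp (-M) + (5/16) * η) * (k n : ℝ) := by
      have hc3 : Real.exp (-(2*M)) * (1 + δ)
          < Real.exp (-(2*M)) * (1 + δ) + Real.exp (-M) * η / 16 :=
        lt_add_of_pos_right _ (by positivity)
      filter_upwards [hL3lim.eventually_lt_const hc3, hblt, hblb 1, hTpos,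
        eventually_ge_atTop 1] with n h1 h2 h3 h4 h5
      have hbpos : 0 < b n := lt_of_lt_of_le one_pos h3
      have h6 : R (b n * x1) < T n := h2 _ (lt_mul_of_one_lt_right hbpos hx1)
      have h7 : 0 < R (b n * x1) := hRpos _
      have h8 : R (b n * Real.exp (2 * M / α)) / T n
          ≤ R (b n * Real.exp (2 * M / α)) / R (b n * x1) := by
        gcongr
        exact hRnonneg _
      have h9 : R (b n * Real.exp (2 * M / α)) <
          (Real.exp (-(2*M)) * (1 + δ) + Real.exp (-M) * η / 16) * T n :=
        (div_lt_iff₀ h4).1 (lt_of_le_of_lt h8 h1)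
      have hn0 : (0:ℝ) < n := by exact_mod_cast h5
      have e4 : Real.exp M * Real.exp (-(2*M)) = Real.exp (-M) := by
        rw [← Real.exp_add]; ring_nf
      have h11 : (n:ℝ) * ((Real.exp (-(2*M)) * (1 + δ) + Real.exp (-M) * η / 16) * T n)
          = (Real.exp M * (Real.exp (-(2*M)) * (1 + δ) + Real.exp (-M) * η / 16)) * (k n : ℝ) := by
        simp only [hTdef]
        field_simp
      have h12 : Real.exp M * (Real.exp (-(2*M)) * (1 + δ) + Real.exp (-M) * η / 16)
          = Real.exp (-M) + (5/16) * η := by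
        rw [hδdef]
        linear_combination (1 + η * Real.exp M / 4) * e4 + (η/4 + η/16) * e2
      calc (n : ℝ) * R (b n * Real.exp (2 * M / α))
          ≤ (n:ℝ) * ((Real.exp (-(2*M)) * (1 + δ) + Real.exp (-M) * η / 16) * T n) :=
            mul_le_mul_of_nonneg_left h9.le hn0.le
        _ = _ := by rw [h11, h12]
    -- probabilities of the two bad events
    set C1 : ℝ := Real.exp M * (2 + δ) / (lam - 1)^2 with hC1def
    set C2 : ℝ := (Real.exp (-M) + (5/16)*η) / (3*η/16)^2 with hC2def
    have hlam'pos : 0 < lam - 1 := by linarith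
    have hμ1 : ∀ᶠ n : ℕ in atTop,
        μ {ω | (lam - 1) * (k n:ℝ) ≤
          |((((Finset.Icc 1 n).filter (fun i => b n < X i ω)).card : ℝ))
            - (n : ℝ) * (1 - F (b n))|} ≤ ENNReal.ofReal (C1 / (k n:ℝ)) := by
      filter_upwards [hB2, hk.eventually_ge_atTop 1] with n h2 h3
      have hk0 : (0:ℝ) < k n := by exact_mod_cast h3
      have ha : 0 < (lam - 1) * (k n:ℝ) := by positivity
      refine le_trans (aux_count_cheb μ X F hmeas hindep hcdf n (b n) _ ha)
        (ENNReal.ofReal_le_ofReal ?_)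
      have h2' : (n:ℝ) * (1 - F (b n)) ≤ (Real.exp M * (2 + δ)) * (k n : ℝ) := h2
      have hnum_nn : (0:ℝ) ≤ (n:ℝ) * (1 - F (b n)) := by
        have := hRnonneg (b n); positivity
      calc (n:ℝ) * (1 - F (b n)) / ((lam - 1) * (k n:ℝ))^2
          ≤ (Real.exp M * (2 + δ)) * (k n:ℝ) / ((lam - 1) * (k n:ℝ))^2 := by gcongr
        _ = C1 / (k n:ℝ) := by
            rw [hC1def]
            field_simp
    have hμ2 : ∀ᶠ n : ℕ in atTop,
        μ {ω | (3*η/16) * (k n:ℝ) ≤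
          |((((Finset.Icc 1 n).filter
              (fun i => b n * Real.exp (2*M/α) < X i ω)).card : ℝ))
            - (n : ℝ) * (1 - F (b n * Real.exp (2*M/α)))|}
          ≤ ENNReal.ofReal (C2 / (k n:ℝ)) := by
      filter_upwards [hB3, hk.eventually_ge_atTop 1] with n h2 h3
      have hk0 : (0:ℝ) < k n := by exact_mod_cast h3
      have ha : 0 < (3*η/16) * (k n:ℝ) := by positivity
      refine le_trans (aux_count_cheb μ X F hmeas hindep hcdf n (b n * Real.exp (2*M/α)) _ ha)
        (ENNReal.ofReal_le_ofReal ?_)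
      have h2' : (n:ℝ) * (1 - F (b n * Real.exp (2*M/α)))
          ≤ (Real.exp (-M) + (5/16)*η) * (k n : ℝ) := h2
      have hnum_nn : (0:ℝ) ≤ (n:ℝ) * (1 - F (b n * Real.exp (2*M/α))) := by
        have := hRnonneg (b n * Real.exp (2*M/α)); positivity
      calc (n:ℝ) * (1 - F (b n * Real.exp (2*M/α))) / ((3*η/16) * (k n:ℝ))^2
          ≤ (Real.exp (-M) + (5/16)*η) * (k n:ℝ) / ((3*η/16) * (k n:ℝ))^2 := by gcongr
        _ = C2 / (k n:ℝ) := by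
            rw [hC2def]
            field_simp
    -- deterministic inclusion into the union of bad events
    have hcoef : Real.exp (-M) + η/2 < 1 := by linarith
    have hincl : ∀ᶠ n : ℕ in atTop,
        {ω | η <
          |(((Finset.Icc 1 (k n)).filter (fun j : ℕ =>
                (k n : ℝ) * Real.exp (-M) ≤ (j : ℝ) ∧
                Real.log (ord n j ω / ord n (k n) ω) ≤ 2 * M / α)).card : ℝ) / (k n : ℝ) -
            (1 - Real.exp (-M))|}
          ⊆ {ω | (lam - 1) * (k n:ℝ) ≤
              |((((Finset.Icc 1 n).filter (fun i => b n < X i ω)).card : ℝ))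
                - (n : ℝ) * (1 - F (b n))|}
            ∪ {ω | (3*η/16) * (k n:ℝ) ≤
              |((((Finset.Icc 1 n).filter
                  (fun i => b n * Real.exp (2*M/α) < X i ω)).card : ℝ))
                - (n : ℝ) * (1 - F (b n * Real.exp (2*M/α)))|} := by
      filter_upwards [hB1, hB3, hblb 1, hkle, hk.eventually_ge_atTop 1,
        hkR.eventually_ge_atTop (2/η),
        hkR.eventually_ge_atTop (1/(1 - (Real.exp (-M) + η/2)))]
        with n hb1 hb3 hbge1 hknle hk1 hk2 hk3
      intro ω hω
      by_contra hc
      simp only [Set.mem_union, Set.mem_setOf_eq, not_or, not_le] at hc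
      obtain ⟨hc1, hc2⟩ := hc
      simp only [Set.mem_setOf_eq] at hω
      set K := k n with hKdef
      have hK1 : 1 ≤ K := hk1
      have hK0 : (0:ℝ) < K := by exact_mod_cast hK1
      have hKη : 2 ≤ η * (K:ℝ) := by
        rw [div_le_iff₀ hη] at hk2
        linarith
      have hcoefpos : 0 < 1 - (Real.exp (-M) + η/2) := by linarith
      have hk3' : 1 ≤ (1 - (Real.exp (-M) + η/2)) * (K:ℝ) := by
        rw [div_le_iff₀ hcoefpos] at hk3
        linarith
      set jst := Nat.ceil ((Real.exp (-M) + η/2) * (K:ℝ)) with hjstdef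
      have hjst1 : 1 ≤ jst := Nat.ceil_pos.2 (by positivity)
      have hjstlt : (jst:ℝ) < (Real.exp (-M) + η/2) * (K:ℝ) + 1 :=
        Nat.ceil_lt_add_one (by positivity)
      have hjstge : (Real.exp (-M) + η/2) * (K:ℝ) ≤ (jst:ℝ) := Nat.le_ceil _
      have hjstK : jst ≤ K := by
        rw [hjstdef, Nat.ceil_le]
        have h := mul_le_mul_of_nonneg_right hcoef.le hK0.le
        linarith
      -- not Bad1 gives: b n < ord n K ω
      have habs1 := (abs_lt.1 hc1).1
      have hcnt1 : (K:ℝ) < (((Finset.Icc 1 n).filter (fun i => b n < X i ω)).card : ℝ) := by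
        have hb1' : lam * (K:ℝ) ≤ (n:ℝ) * (1 - F (b n)) := hb1
        linarith
      have hcnt1' : K ≤ (((Finset.Icc 1 n).filter (fun i => b n < X i ω)).card) := by
        have := hcnt1.le
        exact_mod_cast (Nat.cast_lt.1 hcnt1).le
      have hordK : b n < ord n K ω := (aux_ord_gt_iff hord ω hK1 hknle (b n)).2 hcnt1'
      -- not Bad2 gives: ord n jst ω ≤ b n * exp(2M/α)
      have habs2 := (abs_lt.1 hc2).2
      have hcnt2 : ((((Finset.Icc 1 n).filter
          (fun i => b n * Real.exp (2*M/α) < X i ω)).card : ℝ)) < (jst:ℝ) := by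
        have hb3' : (n:ℝ) * (1 - F (b n * Real.exp (2*M/α)))
            ≤ (Real.exp (-M) + (5/16)*η) * (K:ℝ) := hb3
        linarith
      have hcnt2' : (((Finset.Icc 1 n).filter
          (fun i => b n * Real.exp (2*M/α) < X i ω)).card) < jst := by exact_mod_cast hcnt2
      have hordjst : ord n jst ω ≤ b n * Real.exp (2*M/α) := by
        by_contra hcon
        push_neg at hcon
        have := (aux_ord_gt_iff hord ω hjst1 (le_trans hjstK hknle) _).1 hcon
        omega
      have hbpos : 0 < b n := lt_of_lt_of_le one_pos hbge1
      have hordKpos : 0 < ord n K ω := lt_trans hbpos hordK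
      -- all indices in [jst, K] belong to the QQ-plot count
      have hsub : Finset.Icc jst K ⊆ (Finset.Icc 1 K).filter (fun j : ℕ =>
          (K : ℝ) * Real.exp (-M) ≤ (j : ℝ) ∧
          Real.log (ord n j ω / ord n K ω) ≤ 2 * M / α) := by
        intro j hj
        rw [Finset.mem_Icc] at hj
        rw [Finset.mem_filter, Finset.mem_Icc]
        have hj1 : 1 ≤ j := le_trans hjst1 hj.1
        refine ⟨⟨hj1, hj.2⟩, ?_, ?_⟩
        · have hcast : ((jst:ℝ)) ≤ (j:ℝ) := by exact_mod_cast hj.1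
          have hpos : 0 ≤ η/2 * (K:ℝ) := by positivity
          linarith [hjstge]
        · have hjle : ord n j ω ≤ ord n jst ω :=
            (hord ω n).1 jst j hjst1 hj.1 (le_trans hj.2 hknle)
          have hjge' : ord n K ω ≤ ord n j ω := (hord ω n).1 j K hj1 hj.2 hknle
          have hratpos : 0 < ord n j ω / ord n K ω :=
            div_pos (lt_of_lt_of_le hordKpos hjge') hordKpos
          have hrat : ord n j ω / ord n K ω ≤ Real.exp (2*M/α) := by
            rw [div_le_iff₀ hordKpos]
            calc ord n j ω ≤ b n * Real.exp (2*M/α) := le_trans hjle hordjst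
              _ ≤ Real.exp (2*M/α) * ord n K ω := by
                  rw [mul_comm (b n) (Real.exp (2*M/α))]
                  exact mul_le_mul_of_nonneg_left hordK.le (Real.exp_pos _).le
          calc Real.log (ord n j ω / ord n K ω) ≤ Real.log (Real.exp (2*M/α)) :=
                Real.log_le_log hratpos hrat
            _ = 2*M/α := Real.log_exp _
      set cnt := ((Finset.Icc 1 K).filter (fun j : ℕ =>
          (K : ℝ) * Real.exp (-M) ≤ (j : ℝ) ∧
          Real.log (ord n j ω / ord n K ω) ≤ 2 * M / α)).card with hcntdef
      -- lower bound for the count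
      have hlow : (1 - Real.exp (-M) - η/2) * (K:ℝ) ≤ (cnt:ℝ) := by
        have h1 := Finset.card_le_card hsub
        rw [Nat.card_Icc] at h1
        have hle' : jst ≤ K + 1 := le_trans hjstK (Nat.le_succ K)
        have h2 : ((K + 1 - jst : ℕ):ℝ) = (K:ℝ) + 1 - (jst:ℝ) := by
          rw [Nat.cast_sub hle']
          push_cast
          ring
        have h3 : ((K + 1 - jst : ℕ):ℝ) ≤ (cnt:ℝ) := by exact_mod_cast h1
        rw [h2] at h3
        linarith [hjstlt]
      -- upper bound for the count
      have hup : (cnt:ℝ) ≤ (1 - Real.exp (-M)) * (K:ℝ) + 1 := by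
        set m1 := max 1 (Nat.ceil ((K:ℝ) * Real.exp (-M))) with hm1def
        have hsub2 : (Finset.Icc 1 K).filter (fun j : ℕ =>
            (K : ℝ) * Real.exp (-M) ≤ (j : ℝ) ∧
            Real.log (ord n j ω / ord n K ω) ≤ 2 * M / α) ⊆ Finset.Icc m1 K := by
          intro j hj
          rw [Finset.mem_filter, Finset.mem_Icc] at hj
          rw [Finset.mem_Icc]
          refine ⟨?_, hj.1.2⟩
          rw [hm1def, max_le_iff]
          exact ⟨hj.1.1, Nat.ceil_le.2 hj.2.1⟩
        have h1 := Finset.card_le_card hsub2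
        rw [Nat.card_Icc] at h1
        have hm1K : m1 ≤ K + 1 := by
          rw [hm1def, max_le_iff]
          constructor
          · omega
          · have hcl : Nat.ceil ((K:ℝ) * Real.exp (-M)) ≤ K := by
              rw [Nat.ceil_le]
              have h := mul_le_mul_of_nonneg_left hexpM1.le hK0.le
              linarith
            omega
        have h2 : ((K + 1 - m1 : ℕ):ℝ) = (K:ℝ) + 1 - (m1:ℝ) := by
          rw [Nat.cast_sub hm1K]
          push_cast
          ring
        have h3 : (cnt:ℝ) ≤ ((K + 1 - m1 : ℕ):ℝ) := by exact_mod_cast h1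
        rw [h2] at h3
        have h4 : (K:ℝ) * Real.exp (-M) ≤ (m1:ℝ) := by
          have h5 : (K:ℝ) * Real.exp (-M) ≤ (Nat.ceil ((K:ℝ) * Real.exp (-M)) : ℝ) :=
            Nat.le_ceil _
          have h6 : (Nat.ceil ((K:ℝ) * Real.exp (-M)) : ℝ) ≤ (m1:ℝ) := by
            exact_mod_cast Nat.le_max_right 1 _
          linarith
        linarith
      -- contradiction with hω
      have hdivup : (cnt:ℝ)/(K:ℝ) ≤ 1 - Real.exp (-M) + η/2 := by
        rw [div_le_iff₀ hK0]
        linarith [hup, hKη]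
      have hdivlow : 1 - Real.exp (-M) - η/2 ≤ (cnt:ℝ)/(K:ℝ) := by
        rw [le_div_iff₀ hK0]
        linarith [hlow]
      have habs : |(cnt:ℝ)/(K:ℝ) - (1 - Real.exp (-M))| ≤ η/2 :=
        abs_le.2 ⟨by linarith, by linarith⟩
      linarith
    -- assemble
    have hbound : ∀ᶠ n : ℕ in atTop,
        μ {ω | η <
          |(((Finset.Icc 1 (k n)).filter (fun j : ℕ =>
                (k n : ℝ) * Real.exp (-M) ≤ (j : ℝ) ∧
                Real.log (ord n j ω / ord n (k n) ω) ≤ 2 * M / α)).card : ℝ) / (k n : ℝ) -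
            (1 - Real.exp (-M))|}
          ≤ ENNReal.ofReal (C1 / (k n:ℝ)) + ENNReal.ofReal (C2 / (k n:ℝ)) := by
      filter_upwards [hincl, hμ1, hμ2] with n h1 h2 h3
      exact le_trans (measure_mono h1) (le_trans (measure_union_le _ _) (add_le_add h2 h3))
    have hC1lim : Tendsto (fun n => C1 / (k n:ℝ)) atTop (nhds 0) := hkR.const_div_atTop C1
    have hC2lim : Tendsto (fun n => C2 / (k n:ℝ)) atTop (nhds 0) := hkR.const_div_atTop C2
    have hsum : Tendsto (fun n => ENNReal.ofReal (C1 / (k n:ℝ))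
        + ENNReal.ofReal (C2 / (k n:ℝ))) atTop (nhds 0) := by
      have := (ENNReal.tendsto_ofReal hC1lim).add (ENNReal.tendsto_ofReal hC2lim)
      simpa using this
    exact tendsto_of_tendsto_of_tendsto_of_le_of_le' tendsto_const_nhds hsum
      (Filter.Eventually.of_forall (fun n => zero_le)) hbound


  -- reduce general η to small η
  intro η hη
  rcases le_or_gt η ((1 - Real.exp (-M)) / 2) with hle | hgt
  · exact main η hη hle
  · have hη' : 0 < (1 - Real.exp (-M)) / 2 := by linarith
    have h := main _ hη' le_rfl
    refine tendsto_of_tendsto_of_tendsto_of_le_of_le tendsto_const_nhds h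
      (fun n => zero_le) (fun n => measure_mono ?_)
    intro ω hω
    simp only [Set.mem_setOf_eq] at hω ⊢
    linarith
end

section
/- Let $X_1, X_2, \ldots$ be iid nonnegative random variables with distribution function $F$ whose tail is regularly varying with index $-\alpha$ ($\alpha > 0$), and let $X_{(1)} \ge \cdots \ge X_{(n)}$ be the order statistics of the first $n$ in decreasing order. Let $k = k(n) \to \infty$ with $k/n \to 0$. For $M > 1$ define the tail functional $T_{n,M} := \tfrac{1}{k}\sum_{i=1}^{n} \big(\log\tfrac{X_i}{X_{(k)}}\big)^2 \mathbf{1}\{X_i > M X_{(k)}\}$. Then for every $\eta > 0$, $\lim_{M \to \infty} \limsup_{n \to \infty} P\big[T_{n,M} > \eta\big] = 0$. -/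
open MeasureTheory Filter Set ProbabilityTheory
open scoped ENNReal

section Aux

lemma card_filter_fin_lt {n m : ℕ} (h : m ≤ n) :
    (Finset.univ.filter fun i : Fin n => i.1 < m).card = m := by
  have : (Finset.univ.filter fun i : Fin n => i.1 < m)
      = Finset.map (Fin.castLEEmb h) Finset.univ := by
    ext i
    simp only [Finset.mem_filter, Finset.mem_univ, true_and, Finset.mem_map]
    constructor
    · intro hi
      exact ⟨⟨i.1, hi⟩, rfl⟩
    · rintro ⟨a, rfl⟩
      simpa [Fin.castLEEmb] using a.2
  rw [this, Finset.card_map, Finset.card_univ, Fintype.card_fin]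

lemma ord_ge_iff_count {Ω : Type*} {X : ℕ → Ω → ℝ} {ord : ℕ → ℕ → Ω → ℝ}
    (hord : IsDecOrderStat X ord) (ω : Ω) {n j : ℕ} (hj1 : 1 ≤ j) (hjn : j ≤ n) (u : ℝ) :
    u ≤ ord n j ω ↔ j ≤ (Finset.univ.filter fun i : Fin n => u ≤ X (i.1 + 1) ω).card := by
  classical
  obtain ⟨hmono, σ, hσ⟩ := hord ω n
  have hcard : (Finset.univ.filter fun i : Fin n => u ≤ ord n (i.1 + 1) ω).card
      = (Finset.univ.filter fun i : Fin n => u ≤ X (i.1 + 1) ω).card := by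
    apply Finset.card_equiv σ
    intro i
    simp [hσ i]
  rw [← hcard]
  constructor
  · intro h
    have hsub : (Finset.univ.filter fun i : Fin n => i.1 < j)
        ⊆ (Finset.univ.filter fun i : Fin n => u ≤ ord n (i.1 + 1) ω) := by
      intro i hi
      simp only [Finset.mem_filter, Finset.mem_univ, true_and] at hi ⊢
      exact le_trans h (hmono (i.1+1) j (Nat.le_add_left 1 _) hi hjn)
    have := Finset.card_le_card hsub
    rwa [card_filter_fin_lt hjn] at this
  · intro h
    by_contra hlt
    push_neg at hlt
    have hsub : (Finset.univ.filter fun i : Fin n => u ≤ ord n (i.1 + 1) ω)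
        ⊆ (Finset.univ.filter fun i : Fin n => i.1 < j - 1) := by
      intro i hi
      simp only [Finset.mem_filter, Finset.mem_univ, true_and] at hi ⊢
      by_contra hge
      push_neg at hge
      have hji : j ≤ i.1 + 1 := by omega
      have := hmono j (i.1 + 1) hj1 hji i.2
      linarith
    have := Finset.card_le_card hsub
    rw [card_filter_fin_lt (by omega)] at this
    omega

lemma card_fin_icc (n : ℕ) (p : ℕ → Prop) [DecidablePred p] :
    (Finset.univ.filter fun i : Fin n => p (i.1 + 1)).card
      = ((Finset.Icc 1 n).filter p).card := by
  apply Finset.card_nbij (fun i => i.1 + 1)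
  · intro a ha
    simp only [Finset.mem_coe, Finset.mem_filter, Finset.mem_univ, true_and] at ha
    simp only [Finset.mem_coe, Finset.mem_filter, Finset.mem_Icc]
    exact ⟨⟨by omega, by have := a.2; omega⟩, ha⟩
  · intro a _ b _ hab
    simp only at hab
    exact Fin.ext (by omega)
  · intro b hb
    simp only [Finset.coe_filter, Finset.mem_Icc, Set.mem_setOf_eq] at hb
    refine ⟨⟨b - 1, by omega⟩, ?_, by simp; omega⟩
    simp only [Set.mem_setOf_eq, Finset.mem_coe, Finset.mem_filter, Finset.mem_univ, true_and]
    have : b - 1 + 1 = b := by omega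
    rw [this]
    exact hb.2

lemma rv_structure (F : ℝ → ℝ) (α : ℝ) (hα : 0 < α) (hrv : RegVaryingTail F α)
    (hF1 : ∀ x, F x ≤ 1) :
    ∃ t0 : ℝ, 1 ≤ t0 ∧ (∀ t, t0 ≤ t → 0 < 1 - F t) ∧
      (∀ t, t0 ≤ t → ∀ m : ℕ, 1 - F (Real.exp m * t) ≤ Real.exp (-(α/2) * m) * (1 - F t)) ∧
      (∀ t, t0 ≤ t → 1 - F t ≤ Real.exp (3*α/2) * (1 - F (Real.exp 1 * t))) := by
  obtain ⟨L, hL, hslow⟩ := hrv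
  have hLnn : ∀ t > (0:ℝ), 0 ≤ L t := by
    intro t ht
    have h1 := hL t ht
    have h2 : (0:ℝ) < t ^ (-α) := Real.rpow_pos_of_pos ht _
    nlinarith [sub_nonneg.mpr (hF1 t)]
  have hev1 : ∀ᶠ t in atTop, L t ≠ 0 := by
    have h := (hslow 1 one_pos).eventually (eventually_gt_nhds (by norm_num : (0:ℝ) < 1))
    filter_upwards [h] with t ht
    intro h0
    simp [mul_one, h0] at ht
  have hmem : Set.Ioo (Real.exp (-(α/2))) (Real.exp (α/2)) ∈ nhds (1:ℝ) := by
    apply Ioo_mem_nhds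
    · rw [← Real.exp_zero]; exact Real.exp_lt_exp.mpr (by linarith)
    · rw [← Real.exp_zero]; exact Real.exp_lt_exp.mpr (by linarith)
  have hev2 := (hslow (Real.exp 1) (Real.exp_pos 1)).eventually hmem
  rw [eventually_atTop] at hev1 hev2
  obtain ⟨ta, hta⟩ := hev1
  obtain ⟨tb, htb⟩ := hev2
  set t0 : ℝ := max 1 (max ta tb) with ht0def
  have ht01 : (1:ℝ) ≤ t0 := le_max_left _ _
  have hLpos : ∀ t, t0 ≤ t → 0 < L t := by
    intro t ht
    have h1 : (0:ℝ) < t := lt_of_lt_of_le one_pos (le_trans ht01 ht)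
    exact lt_of_le_of_ne (hLnn t h1) (Ne.symm (hta t (le_trans (le_trans (le_max_left _ _) (le_max_right _ _)) ht)))
  have hratio : ∀ t, t0 ≤ t →
      Real.exp (-(α/2)) * L t ≤ L (t * Real.exp 1) ∧ L (t * Real.exp 1) ≤ Real.exp (α/2) * L t := by
    intro t ht
    have h := htb t (le_trans (le_trans (le_max_right _ _) (le_max_right _ _)) ht)
    have hp := hLpos t ht
    constructor
    · have := h.1
      rw [lt_div_iff₀ hp] at this
      linarith
    · have := h.2
      rw [div_lt_iff₀ hp] at this
      linarith
  have htpos : ∀ t, t0 ≤ t → (0:ℝ) < t := fun t ht => lt_of_lt_of_le one_pos (le_trans ht01 ht)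
  have hstep : ∀ t, t0 ≤ t → 1 - F (Real.exp 1 * t) ≤ Real.exp (-(α/2)) * (1 - F t) := by
    intro t ht
    have hp : (0:ℝ) < t := htpos t ht
    have hep : (0:ℝ) < Real.exp 1 * t := mul_pos (Real.exp_pos 1) hp
    rw [hL _ hep, hL _ hp]
    have hmul : (Real.exp 1 * t) ^ (-α) = Real.exp (-α) * t ^ (-α) := by
      rw [Real.mul_rpow (Real.exp_pos 1).le hp.le, Real.exp_one_rpow]
    rw [hmul]
    have h2 := (hratio t ht).2
    rw [mul_comm (Real.exp 1) t]
    have h3 : (0:ℝ) < t ^ (-α) := Real.rpow_pos_of_pos hp _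
    calc Real.exp (-α) * t ^ (-α) * L (t * Real.exp 1)
        ≤ Real.exp (-α) * t ^ (-α) * (Real.exp (α/2) * L t) := by
          apply mul_le_mul_of_nonneg_left h2
          positivity
      _ = Real.exp (-(α/2)) * (t ^ (-α) * L t) := by
          have hee : Real.exp (-α) * Real.exp (α/2) = Real.exp (-(α/2)) := by
            rw [← Real.exp_add]; ring_nf
          rw [← hee]; ring
  have hstepup : ∀ t, t0 ≤ t → 1 - F t ≤ Real.exp (3*α/2) * (1 - F (Real.exp 1 * t)) := by
    intro t ht
    have hp : (0:ℝ) < t := htpos t ht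
    have hep : (0:ℝ) < Real.exp 1 * t := mul_pos (Real.exp_pos 1) hp
    rw [hL _ hep, hL _ hp]
    have hmul : (Real.exp 1 * t) ^ (-α) = Real.exp (-α) * t ^ (-α) := by
      rw [Real.mul_rpow (Real.exp_pos 1).le hp.le, Real.exp_one_rpow]
    rw [hmul, mul_comm (Real.exp 1) t]
    have h1 := (hratio t ht).1
    have h3 : (0:ℝ) < t ^ (-α) := Real.rpow_pos_of_pos hp _
    calc t ^ (-α) * L t
        ≤ t ^ (-α) * (Real.exp (α/2) * L (t * Real.exp 1)) := by
          apply mul_le_mul_of_nonneg_left _ h3.le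
          have := Real.exp_pos (α/2)
          calc L t = Real.exp (α/2) * (Real.exp (-(α/2)) * L t) := by
                rw [← mul_assoc, ← Real.exp_add]; simp
            _ ≤ Real.exp (α/2) * L (t * Real.exp 1) :=
                mul_le_mul_of_nonneg_left h1 (Real.exp_pos _).le
      _ = Real.exp (3*α/2) * (Real.exp (-α) * t ^ (-α) * L (t * Real.exp 1)) := by
          have hee : Real.exp (3*α/2) * Real.exp (-α) = Real.exp (α/2) := by
            rw [← Real.exp_add]; ring_nf
          rw [← hee]; ring
  have hiter : ∀ t, t0 ≤ t → ∀ m : ℕ, 1 - F (Real.exp m * t) ≤ Real.exp (-(α/2) * m) * (1 - F t) := by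
    intro t ht m
    induction m with
    | zero => simp
    | succ m ih =>
        have hm1 : (1:ℝ) ≤ Real.exp m := Real.one_le_exp (Nat.cast_nonneg m)
        have htm : t0 ≤ Real.exp m * t := le_trans ht (le_mul_of_one_le_left (htpos t ht).le hm1)
        have h1 := hstep _ htm
        have heq : Real.exp ((m:ℕ)+1 : ℕ) * t = Real.exp 1 * (Real.exp m * t) := by
          have h4 : (((m+1:ℕ)):ℝ) = 1 + (m:ℝ) := by push_cast; ring
          rw [h4, Real.exp_add, mul_assoc]
        rw [heq]
        calc 1 - F (Real.exp 1 * (Real.exp m * t))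
            ≤ Real.exp (-(α/2)) * (1 - F (Real.exp m * t)) := h1
          _ ≤ Real.exp (-(α/2)) * (Real.exp (-(α/2) * m) * (1 - F t)) :=
              mul_le_mul_of_nonneg_left ih (Real.exp_pos _).le
          _ = Real.exp (-(α/2) * ((m:ℕ)+1:ℕ)) * (1 - F t) := by
              have h5 : Real.exp (-(α/2)) * Real.exp (-(α/2) * m) = Real.exp (-(α/2) * (((m+1:ℕ)):ℝ)) := by
                rw [← Real.exp_add]; push_cast; ring_nf
              rw [← mul_assoc, h5]
  refine ⟨t0, ht01, ?_, hiter, hstepup⟩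
  intro t ht
  rw [hL t (htpos t ht)]
  exact mul_pos (Real.rpow_pos_of_pos (htpos t ht) _) (hLpos t ht)

lemma summable_weight {c : ℝ} (hc : 0 < c) :
    Summable (fun m : ℕ => ((m:ℝ)+2)^2 * Real.exp (-c * m)) := by
  have hr : ‖Real.exp (-c)‖ < 1 := by
    rw [Real.norm_eq_abs, abs_of_pos (Real.exp_pos _), ← Real.exp_zero]
    exact Real.exp_lt_exp.mpr (by linarith)
  have s2 := summable_pow_mul_geometric_of_norm_lt_one (R := ℝ) 2 hr
  have s1 := summable_pow_mul_geometric_of_norm_lt_one (R := ℝ) 1 hr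
  have s0 := summable_pow_mul_geometric_of_norm_lt_one (R := ℝ) 0 hr
  have := (s2.add ((s1.mul_left 4).add (s0.mul_left 4)))
  apply this.congr
  intro m
  have : Real.exp (-c * m) = Real.exp (-c) ^ m := by
    rw [mul_comm, Real.exp_nat_mul]
  rw [this]
  ring

lemma cheb_count {Ω : Type*} [MeasurableSpace Ω] (μ : Measure Ω) [IsProbabilityMeasure μ]
    (X : ℕ → Ω → ℝ)
    (hmeas : ∀ i, Measurable (X i))
    (hindep : iIndepFun X μ)
    (n K : ℕ) (hn : 1 ≤ n) (hK : 1 ≤ K) (u C : ℝ)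
    (hpl : ∀ i ∈ Finset.Icc 1 n, 3*(K:ℝ)/n < (μ {ω | u ≤ X i ω}).toReal)
    (hpu : ∀ i ∈ Finset.Icc 1 n, (μ {ω | u ≤ X i ω}).toReal ≤ C*K/n) :
    μ {ω | (((Finset.Icc 1 n).filter (fun i => u ≤ X i ω)).card : ℕ) < K}
      ≤ ENNReal.ofReal (C / (4*K)) := by
  classical
  have hnR : (0:ℝ) < n := by exact_mod_cast hn
  have hKR : (0:ℝ) < K := by exact_mod_cast hK
  set f : ℝ → ℝ := fun x => if u ≤ x then 1 else 0 with hf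
  have hfmeas : Measurable f := by
    have : f = (Set.Ici u).indicator (fun _ => (1:ℝ)) := by
      funext x; simp [hf, Set.indicator_apply, Set.mem_Ici]
    rw [this]
    exact measurable_const.indicator measurableSet_Ici
  set B : ℕ → Ω → ℝ := fun i => f ∘ X i with hB
  have hBmeas : ∀ i, Measurable (B i) := fun i => hfmeas.comp (hmeas i)
  have hSmeas : ∀ i, MeasurableSet {ω | u ≤ X i ω} :=
    fun i => measurableSet_le measurable_const (hmeas i)
  have hB2 : ∀ i, MemLp (B i) 2 μ := by
    intro i
    apply MemLp.of_bound (hBmeas i).aestronglyMeasurable 1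
    filter_upwards with ω
    by_cases h : u ≤ X i ω <;> simp [hB, hf, Function.comp, h]
  have hEB : ∀ i, μ[B i] = (μ {ω | u ≤ X i ω}).toReal := by
    intro i
    have heq : B i = Set.indicator {ω | u ≤ X i ω} (fun _ => (1:ℝ)) := by
      funext ω; simp [hB, hf, Function.comp, Set.indicator_apply, Set.mem_setOf_eq]
    rw [heq, integral_indicator_const _ (hSmeas i)]
    simp
    rfl
  have hVarB : ∀ i, variance (B i) μ ≤ (μ {ω | u ≤ X i ω}).toReal := by
    intro i
    rw [variance_eq_sub (hB2 i)]
    have hsq : (B i) ^ 2 = B i := by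
      funext ω
      by_cases h : u ≤ X i ω <;> simp [hB, hf, Function.comp, h]
    rw [hsq, hEB i]
    nlinarith [sq_nonneg ((μ {ω | u ≤ X i ω}).toReal)]
  set N : Ω → ℝ := fun ω => ∑ i ∈ Finset.Icc 1 n, B i ω with hNdef
  have hN2 : MemLp N 2 μ := by
    have h := memLp_finset_sum' (s := Finset.Icc 1 n) (μ := μ) (f := B) (fun i _ => hB2 i)
    have heq : N = ∑ i ∈ Finset.Icc 1 n, B i := by
      funext ω; rw [hNdef]; simp [Finset.sum_apply]
    rw [heq]; exact h
  have hEN : μ[N] = ∑ i ∈ Finset.Icc 1 n, (μ {ω | u ≤ X i ω}).toReal := by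
    rw [hNdef]
    rw [integral_finset_sum _ (fun i _ => (hB2 i).integrable one_le_two)]
    exact Finset.sum_congr rfl (fun i _ => hEB i)
  have hENlow : 3*(K:ℝ) < μ[N] := by
    rw [hEN]
    have h1 : ∑ _i ∈ Finset.Icc 1 n, 3*(K:ℝ)/n < ∑ i ∈ Finset.Icc 1 n, (μ {ω | u ≤ X i ω}).toReal := by
      apply Finset.sum_lt_sum_of_nonempty
      · exact ⟨1, by simp [hn]⟩
      · exact hpl
    have h2 : ∑ _i ∈ Finset.Icc 1 n, 3*(K:ℝ)/n = 3*K := by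
      rw [Finset.sum_const, Nat.card_Icc]
      simp only [nsmul_eq_mul]
      rw [show n + 1 - 1 = n from rfl]
      field_simp
    linarith
  have hVarN : variance N μ ≤ C * K := by
    have heq : N = ∑ i ∈ Finset.Icc 1 n, B i := by
      funext ω; rw [hNdef]; simp [Finset.sum_apply]
    rw [heq]
    rw [IndepFun.variance_sum (fun i _ => hB2 i)
      (fun i _ j _ hij => (hindep.comp _ (fun _ => hfmeas)).indepFun hij)]
    calc ∑ i ∈ Finset.Icc 1 n, variance (B i) μ
        ≤ ∑ i ∈ Finset.Icc 1 n, (μ {ω | u ≤ X i ω}).toReal :=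
          Finset.sum_le_sum (fun i _ => hVarB i)
      _ ≤ ∑ _i ∈ Finset.Icc 1 n, C*K/n := Finset.sum_le_sum hpu
      _ = C * K := by
          rw [Finset.sum_const, Nat.card_Icc]
          simp only [nsmul_eq_mul]
          rw [show n + 1 - 1 = n from rfl]
          field_simp
  have hsub : {ω | (((Finset.Icc 1 n).filter (fun i => u ≤ X i ω)).card : ℕ) < K}
      ⊆ {ω | 2*(K:ℝ) ≤ |N ω - μ[N]|} := by
    intro ω hω
    simp only [Set.mem_setOf_eq] at hω ⊢
    have hcard : N ω = (((Finset.Icc 1 n).filter (fun i => u ≤ X i ω)).card : ℝ) := by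
      rw [hNdef]
      simp only [hB, hf, Function.comp]
      rw [Finset.card_filter]
      push_cast
      rfl
    have hlt : N ω < K := by
      rw [hcard]
      exact_mod_cast hω
    rw [abs_sub_comm, le_abs]
    left
    linarith
  calc μ {ω | (((Finset.Icc 1 n).filter (fun i => u ≤ X i ω)).card : ℕ) < K}
      ≤ μ {ω | 2*(K:ℝ) ≤ |N ω - μ[N]|} := measure_mono hsub
    _ ≤ ENNReal.ofReal (variance N μ / (2*K)^2) :=
        meas_ge_le_variance_div_sq hN2 (by positivity)
    _ ≤ ENNReal.ofReal (C / (4*K)) := by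
        apply ENNReal.ofReal_le_ofReal
        rw [div_le_div_iff₀ (by positivity) (by positivity)]
        nlinarith [hVarN]

end Aux
set_option maxHeartbeats 1000000 in
/-- For iid nonnegative `X i` with regularly varying tail of index
`-α` and `k n → ∞`, `k n / n → 0`, the tail functional
`T_{n,M} = (1/k) ∑_{i=1}^n (log(X i / X_{(k)}))² 1{X i > M X_{(k)}}` satisfies
`lim_{M → ∞} limsup_{n → ∞} P[T_{n,M} > η] = 0` for every `η > 0`. -/
theorem tail_functional_negligible {Ω : Type*} [MeasurableSpace Ω]
    (μ : Measure Ω) [IsProbabilityMeasure μ]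
    (X : ℕ → Ω → ℝ) (F : ℝ → ℝ) (α : ℝ) (hα : 0 < α)
    (ord : ℕ → ℕ → Ω → ℝ) (k : ℕ → ℕ)
    (hmeas : ∀ i, Measurable (X i))
    (hindep : iIndepFun X μ)
    (hnonneg : ∀ i ω, 0 ≤ X i ω)
    (hcdf : ∀ i x, (μ {ω | X i ω ≤ x}).toReal = F x)
    (hrv : RegVaryingTail F α)
    (hord : IsDecOrderStat X ord)
    (hk : Tendsto k atTop atTop)
    (hkn : Tendsto (fun n => (k n : ℝ) / (n : ℝ)) atTop (nhds 0))
    (T : ℕ → ℝ → Ω → ℝ)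
    (hT : ∀ n M ω, T n M ω = (1 / (k n : ℝ)) * ∑ i ∈ Finset.Icc 1 n,
        (Real.log (X i ω / ord n (k n) ω)) ^ 2 *
          (if M * ord n (k n) ω < X i ω then 1 else 0)) :
    ∀ η > (0:ℝ),
      Tendsto (fun M : ℝ => Filter.limsup (fun n => μ {ω | η < T n M ω}) atTop)
        atTop (nhds 0) := by
  intro η hη
  classical
  -- basic facts about F
  have hFle1 : ∀ x, F x ≤ 1 := by
    intro x
    rw [← hcdf 1 x]
    exact ENNReal.toReal_le_of_le_ofReal zero_le_one (by simpa using prob_le_one)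
  have hFnn : ∀ x, 0 ≤ F x := fun x => by rw [← hcdf 1 x]; exact ENNReal.toReal_nonneg
  have hFmono : Monotone F := by
    intro a b hab
    rw [← hcdf 1 a, ← hcdf 1 b]
    exact ENNReal.toReal_mono (measure_ne_top μ _) (measure_mono (fun ω h => le_trans h hab))
  obtain ⟨t0, ht01, hFpos', hgrid, hup⟩ := rv_structure F α hα hrv hFle1
  have hFpos : ∀ x, 0 < 1 - F x := by
    intro x
    rcases le_total t0 x with h | h
    · exact hFpos' x h
    · have h1 := hFmono h
      have h2 := hFpos' t0 le_rfl
      linarith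
  have htail : ∀ i x, μ {ω | x < X i ω} = ENNReal.ofReal (1 - F x) := by
    intro i x
    have hs : MeasurableSet {ω | X i ω ≤ x} := measurableSet_le (hmeas i) measurable_const
    have h1 : {ω | x < X i ω} = {ω | X i ω ≤ x}ᶜ := by
      ext ω; simp [not_le]
    have h2 : μ {ω | X i ω ≤ x} = ENNReal.ofReal (F x) := by
      rw [← hcdf i x, ENNReal.ofReal_toReal (measure_ne_top μ _)]
    rw [h1, measure_compl hs (measure_ne_top μ _), measure_univ, h2,
      ← ENNReal.ofReal_one, ← ENNReal.ofReal_sub _ (hFnn x)]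
  set C1 : ℝ := Real.exp (3*α/2) * 3 with hC1
  have hC1pos : 0 < C1 := by positivity
  -- the weight series
  set g : ℕ → ℝ≥0∞ := fun m => ENNReal.ofReal (((m:ℝ)+2)^2 * Real.exp (-(α/2) * m)) with hgdef
  have hsumw : Summable (fun m : ℕ => ((m:ℝ)+2)^2 * Real.exp (-(α/2) * m)) :=
    summable_weight (by linarith)
  have hgtop : ∑' m, g m ≠ ⊤ := by
    rw [hgdef, ← ENNReal.ofReal_tsum_of_nonneg (fun m => by positivity) hsumw]
    exact ENNReal.ofReal_ne_top
  have hGt : Tendsto (fun m1 => ∑' j, g (j + m1)) atTop (nhds 0) :=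
    ENNReal.tendsto_sum_nat_add g hgtop
  -- the threshold sequence
  set v : ℕ → ℝ := fun n => sInf {x : ℝ | t0 ≤ x ∧ 1 - F x ≤ 3 * (k n) / n} with hvdef
  have hSne : ∀ n : ℕ, 0 < n → 0 < k n →
      {x : ℝ | t0 ≤ x ∧ 1 - F x ≤ 3 * (k n) / n}.Nonempty := by
    intro n hn hkn0
    have hq : (0:ℝ) < 3 * (k n) / n := by positivity
    have hdecay : Tendsto (fun m : ℕ => Real.exp (-(α/2) * m) * (1 - F t0)) atTop (nhds 0) := by
      have h1 : Tendsto (fun m : ℕ => Real.exp (-(α/2)) ^ m) atTop (nhds 0) :=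
        tendsto_pow_atTop_nhds_zero_of_lt_one (Real.exp_pos _).le
          (by rw [← Real.exp_zero]; exact Real.exp_lt_exp.mpr (by linarith))
      have h2 : (fun m : ℕ => Real.exp (-(α/2) * m) * (1 - F t0))
          = fun m : ℕ => Real.exp (-(α/2)) ^ m * (1 - F t0) := by
        funext m; rw [mul_comm (-(α/2)) (m:ℝ), Real.exp_nat_mul]
      rw [h2]
      simpa using h1.mul_const (1 - F t0)
    obtain ⟨m, hm⟩ := (hdecay.eventually (eventually_lt_nhds hq)).exists
    refine ⟨Real.exp m * t0, ?_, ?_⟩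
    · exact le_mul_of_one_le_left (by linarith) (Real.one_le_exp (Nat.cast_nonneg m))
    · exact le_trans (hgrid t0 le_rfl m) hm.le
  have hbdd : ∀ n : ℕ, BddBelow {x : ℝ | t0 ≤ x ∧ 1 - F x ≤ 3 * (k n) / n} :=
    fun n => ⟨t0, fun y hy => hy.1⟩
  have hv_lb : ∀ n, 0 < n → 0 < k n → ∀ x, t0 ≤ x → x < v n → 3 * (k n : ℝ) / n < 1 - F x := by
    intro n h1 h2 x hx hxv
    by_contra h
    push_neg at h
    exact absurd (csInf_le (hbdd n) ⟨hx, h⟩) (not_le.mpr hxv)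
  have hv_ub : ∀ n, 0 < n → 0 < k n → 1 - F (v n + 1) ≤ 3 * (k n : ℝ) / n := by
    intro n h1 h2
    obtain ⟨x, hxS, hxlt⟩ := (csInf_lt_iff (hbdd n) (hSne n h1 h2)).mp (lt_add_one (v n))
    have := hFmono hxlt.le
    have h3 := hxS.2
    linarith
  -- the eventual regime in n
  have hkpos : ∀ᶠ n : ℕ in atTop, 1 ≤ k n := hk.eventually_ge_atTop 1
  have hnpos : ∀ᶠ n : ℕ in atTop, 1 ≤ n := eventually_ge_atTop 1
  have h3kn : Tendsto (fun n => 3 * (k n : ℝ) / n) atTop (nhds 0) := by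
    have := hkn.const_mul 3
    simp only [mul_zero] at this
    apply this.congr
    intro n
    ring
  have hq4 : ∀ᶠ n : ℕ in atTop, (k n : ℝ) / n < 1/4 :=
    hkn.eventually (eventually_lt_nhds (by norm_num))
  have hvge : ∀ᶠ n : ℕ in atTop, t0 + 9 ≤ v n := by
    filter_upwards [hkpos, hnpos, h3kn.eventually (eventually_lt_nhds (hFpos (t0+9)))]
      with n h1 h2 h3
    apply le_csInf (hSne n h2 h1)
    intro x hx
    by_contra hlt
    push_neg at hlt
    have h4 := hFmono hlt.le
    have h5 := hx.2
    linarith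
  have hreg : ∀ᶠ n : ℕ in atTop, 1 ≤ k n ∧ 1 ≤ n ∧ (k n : ℝ)/n < 1/4 ∧ t0 + 9 ≤ v n := by
    filter_upwards [hkpos, hnpos, hq4, hvge] with n h1 h2 h3 h4
    exact ⟨h1, h2, h3, h4⟩
  -- the key estimate
  have key : ∀ m1 : ℕ, ∀ M : ℝ, Real.exp ((m1:ℝ) + 1) ≤ M → ∀ n : ℕ,
      (1 ≤ k n ∧ 1 ≤ n ∧ (k n : ℝ)/n < 1/4 ∧ t0 + 9 ≤ v n) →
      μ {ω | η < T n M ω}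
        ≤ ENNReal.ofReal (C1/(4 * (k n : ℝ))) + ENNReal.ofReal (C1/η) * ∑' j, g (j + m1) := by
    intro m1 M hM n hregn
    obtain ⟨hk1, hn1, hq, hv9⟩ := hregn
    have hn0 : 0 < n := hn1
    have hkn0 : 0 < k n := hk1
    have hnR : (0:ℝ) < n := by exact_mod_cast hn1
    have hkR : (0:ℝ) < k n := by exact_mod_cast hk1
    have hknn : k n ≤ n := by
      have h1 : (k n : ℝ) < 1/4 * n := by
        rw [div_lt_iff₀ hnR] at hq
        linarith
      have : (k n : ℝ) ≤ (n:ℝ) := by linarith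
      exact_mod_cast this
    set u : ℝ := v n - 2 with hudef
    have hu1 : t0 ≤ u - 1 := by rw [hudef]; linarith
    have hu0 : t0 ≤ u := by rw [hudef]; linarith
    have hupos : (0:ℝ) < u := by linarith
    have hMpos : (0:ℝ) < M := lt_of_lt_of_le (Real.exp_pos _) hM
    have hM1 : (1:ℝ) ≤ M := le_trans (Real.one_le_exp (by positivity)) hM
    -- tail bounds at u
    have hlowF : 3*(k n : ℝ)/n < 1 - F u :=
      hv_lb n hn0 hkn0 u hu0 (by rw [hudef]; linarith)
    have huppF' : 1 - F (u-1) ≤ C1 * (k n)/n := by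
      have h1 := hup (u-1) hu1
      have hev : v n + 1 ≤ Real.exp 1 * (u - 1) := by
        rw [hudef]
        nlinarith [Real.exp_one_gt_d9, hv9, ht01]
      have h2 : 1 - F (Real.exp 1 * (u-1)) ≤ 1 - F (v n + 1) := by
        have := hFmono hev
        linarith
      have h3 := hv_ub n hn0 hkn0
      calc 1 - F (u-1) ≤ Real.exp (3*α/2) * (1 - F (Real.exp 1 * (u-1))) := h1
        _ ≤ Real.exp (3*α/2) * (3*(k n : ℝ)/n) := by
            apply mul_le_mul_of_nonneg_left (le_trans h2 h3) (Real.exp_pos _).le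
        _ = C1 * (k n)/n := by rw [hC1]; ring
    have huppF : 1 - F u ≤ C1*(k n : ℝ)/n := by
      refine le_trans ?_ huppF'
      have := hFmono (by linarith : u - 1 ≤ u)
      linarith
    -- Chebyshev part
    have hcheb : μ {ω | (((Finset.Icc 1 n).filter (fun i => u ≤ X i ω)).card : ℕ) < k n}
        ≤ ENNReal.ofReal (C1/(4 * (k n : ℝ))) := by
      have hplX : ∀ i ∈ Finset.Icc 1 n, 3*((k n : ℕ):ℝ)/n < (μ {ω | u ≤ X i ω}).toReal := by
        intro i _
        have hmono1 : μ {ω | u < X i ω} ≤ μ {ω | u ≤ X i ω} :=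
          measure_mono (by intro ω h; simp only [Set.mem_setOf_eq] at h ⊢; exact le_of_lt h)
        have h1 := ENNReal.toReal_mono (measure_ne_top μ _) hmono1
        rw [htail i u, ENNReal.toReal_ofReal (hFpos u).le] at h1
        linarith
      have hpuX : ∀ i ∈ Finset.Icc 1 n, (μ {ω | u ≤ X i ω}).toReal ≤ C1*((k n : ℕ):ℝ)/n := by
        intro i _
        have hmono2 : μ {ω | u ≤ X i ω} ≤ μ {ω | u - 1 < X i ω} :=
          measure_mono (by intro ω h; simp only [Set.mem_setOf_eq] at h ⊢; linarith)
        have h1 := ENNReal.toReal_mono (measure_ne_top μ _) hmono2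
        rw [htail i (u-1), ENNReal.toReal_ofReal (hFpos (u-1)).le] at h1
        calc (μ {ω | u ≤ X i ω}).toReal ≤ 1 - F (u - 1) := h1
          _ ≤ C1 * (k n : ℝ)/n := huppF'
      exact cheb_count μ X hmeas hindep n (k n) hn1 hk1 u C1 hplX hpuX
    -- the dominating functional W
    set ind : ℕ → ℕ → Ω → ℝ≥0∞ := fun i m =>
      Set.indicator {ω' | Real.exp (m:ℝ) * u < X i ω'}
        (fun _ => ENNReal.ofReal (((m:ℝ)+2)^2)) with hinddef
    have hindmeas : ∀ i m, Measurable (ind i m) := by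
      intro i m
      exact measurable_const.indicator (measurableSet_lt measurable_const (hmeas i))
    set W : Ω → ℝ≥0∞ := fun ω => ∑ i ∈ Finset.Icc 1 n, ∑' j : ℕ, ind i (j + m1) ω with hWdef
    have hWmeas : Measurable W := by
      apply Finset.measurable_sum
      intro i _
      exact Measurable.ennreal_tsum (fun j => hindmeas i (j + m1))
    -- pointwise claim
    have hpoint : ∀ ω, u ≤ ord n (k n) ω → η < T n M ω →
        ENNReal.ofReal (η * k n) ≤ W ω := by
      intro ω huord hTgt
      set ok := ord n (k n) ω with hokdef
      have hok0 : (0:ℝ) < ok := lt_of_lt_of_le hupos huord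
      have hηk : η * k n ≤ ∑ i ∈ Finset.Icc 1 n,
          (Real.log (X i ω / ok)) ^ 2 * (if M * ok < X i ω then 1 else 0) := by
        rw [hT n M ω] at hTgt
        have h1 := mul_lt_mul_of_pos_right hTgt hkR
        rw [one_div, inv_mul_eq_div, div_mul_cancel₀ _ (ne_of_gt hkR)] at h1
        exact h1.le
      have hterm : ∀ i ∈ Finset.Icc 1 n,
          (0:ℝ) ≤ (Real.log (X i ω / ok)) ^ 2 * (if M * ok < X i ω then 1 else 0) := by
        intro i _
        apply mul_nonneg (sq_nonneg _)
        split <;> norm_num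
      calc ENNReal.ofReal (η * k n)
          ≤ ENNReal.ofReal (∑ i ∈ Finset.Icc 1 n,
              (Real.log (X i ω / ok)) ^ 2 * (if M * ok < X i ω then 1 else 0)) :=
            ENNReal.ofReal_le_ofReal hηk
        _ = ∑ i ∈ Finset.Icc 1 n, ENNReal.ofReal
              ((Real.log (X i ω / ok)) ^ 2 * (if M * ok < X i ω then 1 else 0)) :=
            ENNReal.ofReal_sum_of_nonneg hterm
        _ ≤ W ω := by
            apply Finset.sum_le_sum
            intro i _
            by_cases hind : M * ok < X i ω
            · rw [if_pos hind, mul_one]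
              set x := X i ω with hxdef
              have hxu : Real.exp ((m1:ℝ)+1) * u < x := by
                calc Real.exp ((m1:ℝ)+1) * u ≤ M * u :=
                      mul_le_mul_of_nonneg_right hM hupos.le
                  _ ≤ M * ok := mul_le_mul_of_nonneg_left huord hMpos.le
                  _ < x := hind
              have hxpos : (0:ℝ) < x :=
                lt_trans (by positivity) hxu
              set s := Real.log (x/u) with hsdef
              have hs_lb : (m1:ℝ)+1 < s := by
                have h1 : Real.exp ((m1:ℝ)+1) < x/u := by
                  rw [lt_div_iff₀ hupos]
                  exact hxu
                have h2 := Real.log_lt_log (Real.exp_pos _) h1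
                rwa [Real.log_exp] at h2
              have hs_pos : (0:ℝ) < s := lt_of_le_of_lt (by positivity) hs_lb
              set jt := Nat.floor s with hjtdef
              have hjt1 : 1 ≤ jt := Nat.le_floor (by push_cast; linarith)
              have hm1jt : m1 + 1 ≤ jt := Nat.le_floor (by push_cast; linarith)
              have hfl_le : (jt:ℝ) ≤ s := Nat.floor_le hs_pos.le
              have hfl_gt : s < (jt:ℝ)+1 := Nat.lt_floor_add_one s
              have hjtcast : ((jt - 1 : ℕ):ℝ) = (jt:ℝ) - 1 := by
                rw [Nat.cast_sub hjt1]; norm_num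
              have hfire : Real.exp ((jt - 1 : ℕ):ℝ) * u < x := by
                have h1 : ((jt - 1:ℕ):ℝ) < s := by rw [hjtcast]; linarith
                have h2 : Real.exp ((jt-1:ℕ):ℝ) < x/u := by
                  calc Real.exp ((jt-1:ℕ):ℝ) < Real.exp s := Real.exp_lt_exp.mpr h1
                    _ = x/u := Real.exp_log (div_pos hxpos hupos)
                rw [← lt_div_iff₀ hupos]
                exact h2
              have hlog_ok_nonneg : 0 ≤ Real.log (x/ok) := by
                apply Real.log_nonneg
                rw [le_div_iff₀ hok0, one_mul]
                calc ok = 1 * ok := (one_mul ok).symm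
                  _ ≤ M * ok := mul_le_mul_of_nonneg_right hM1 hok0.le
                  _ ≤ x := hind.le
              have hlog_le : Real.log (x/ok) ≤ s := by
                rw [hsdef]
                apply Real.log_le_log (div_pos hxpos hok0)
                apply div_le_div_of_nonneg_left hxpos.le hupos huord
              have hsq : (Real.log (x/ok))^2 ≤ (((jt-1:ℕ):ℝ)+2)^2 := by
                apply pow_le_pow_left₀ hlog_ok_nonneg
                rw [hjtcast]
                linarith
              calc ENNReal.ofReal ((Real.log (x/ok))^2)
                  ≤ ENNReal.ofReal ((((jt-1:ℕ):ℝ)+2)^2) := ENNReal.ofReal_le_ofReal hsq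
                _ = ind i (jt-1) ω := by
                    simp only [hinddef]
                    have hmem' : ω ∈ {ω' | Real.exp ((jt - 1 : ℕ):ℝ) * u < X i ω'} := hfire
                    rw [Set.indicator_of_mem hmem']
                _ ≤ ∑' j : ℕ, ind i (j + m1) ω := by
                    have heq : jt - 1 = (jt - 1 - m1) + m1 := by omega
                    rw [heq]
                    exact ENNReal.le_tsum (jt - 1 - m1)
            · rw [if_neg hind, mul_zero]
              simp
    -- splitting the event
    have hsplit : {ω | η < T n M ω}
        ⊆ {ω | (((Finset.Icc 1 n).filter (fun i => u ≤ X i ω)).card : ℕ) < k n}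
          ∪ {ω | ENNReal.ofReal (η * k n) ≤ W ω} := by
      intro ω hω
      by_cases hca : k n ≤ ((Finset.Icc 1 n).filter (fun i => u ≤ X i ω)).card
      · right
        have hcnt : k n ≤ (Finset.univ.filter fun i : Fin n => u ≤ X (i.1 + 1) ω).card := by
          rwa [card_fin_icc n (fun i => u ≤ X i ω)]
        exact hpoint ω ((ord_ge_iff_count hord ω hk1 hknn u).mpr hcnt) hω
      · left
        exact not_le.mp hca
    -- Markov part
    have hηkpos : (0:ℝ) < η * k n := by positivity
    have hmarkov : μ {ω | ENNReal.ofReal (η * k n) ≤ W ω}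
        ≤ (∫⁻ ω, W ω ∂μ) / ENNReal.ofReal (η * k n) :=
      meas_ge_le_lintegral_div hWmeas.aemeasurable
        (ne_of_gt (ENNReal.ofReal_pos.mpr hηkpos)) ENNReal.ofReal_ne_top
    have hlint : ∫⁻ ω, W ω ∂μ ≤ ENNReal.ofReal (C1 * (k n : ℝ)) * ∑' j, g (j + m1) := by
      rw [hWdef]
      rw [lintegral_finset_sum _ (fun i _ => Measurable.ennreal_tsum (fun j => hindmeas i (j + m1)))]
      have hone : ∀ i ∈ Finset.Icc 1 n, ∫⁻ ω, ∑' j : ℕ, ind i (j + m1) ω ∂μ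
          ≤ ENNReal.ofReal (C1 * (k n : ℝ)/n) * ∑' j, g (j + m1) := by
        intro i _
        rw [lintegral_tsum (fun j => (hindmeas i (j + m1)).aemeasurable)]
        have hterm : ∀ j : ℕ, ∫⁻ ω, ind i (j + m1) ω ∂μ
            ≤ g (j + m1) * ENNReal.ofReal (C1 * (k n : ℝ)/n) := by
          intro j
          rw [hinddef]
          rw [lintegral_indicator_const (measurableSet_lt measurable_const (hmeas i))]
          have hb1 : 1 - F (Real.exp ((j + m1 : ℕ):ℝ) * u)
              ≤ Real.exp (-(α/2) * ((j + m1 : ℕ):ℝ)) * (C1 * (k n : ℝ)/n) := by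
            calc 1 - F (Real.exp ((j + m1 : ℕ):ℝ) * u)
                ≤ Real.exp (-(α/2) * ((j + m1 : ℕ):ℝ)) * (1 - F u) := hgrid u hu0 (j + m1)
              _ ≤ Real.exp (-(α/2) * ((j + m1 : ℕ):ℝ)) * (C1 * (k n : ℝ)/n) :=
                  mul_le_mul_of_nonneg_left huppF (Real.exp_pos _).le
          calc ENNReal.ofReal ((((j + m1 : ℕ):ℝ)+2)^2)
                * μ {ω' | Real.exp ((j + m1 : ℕ):ℝ) * u < X i ω'}
              = ENNReal.ofReal ((((j + m1 : ℕ):ℝ)+2)^2)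
                * ENNReal.ofReal (1 - F (Real.exp ((j + m1 : ℕ):ℝ) * u)) := by
                rw [htail i (Real.exp ((j + m1 : ℕ):ℝ) * u)]
            _ ≤ ENNReal.ofReal ((((j + m1 : ℕ):ℝ)+2)^2)
                * ENNReal.ofReal (Real.exp (-(α/2) * ((j + m1 : ℕ):ℝ)) * (C1 * (k n : ℝ)/n)) :=
                mul_le_mul_right (ENNReal.ofReal_le_ofReal hb1) _
            _ = g (j + m1) * ENNReal.ofReal (C1 * (k n : ℝ)/n) := by
                rw [hgdef]
                rw [← ENNReal.ofReal_mul (by positivity), ← ENNReal.ofReal_mul (by positivity)]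
                congr 1
                ring
        calc ∑' j : ℕ, ∫⁻ ω, ind i (j + m1) ω ∂μ
            ≤ ∑' j : ℕ, g (j + m1) * ENNReal.ofReal (C1 * (k n : ℝ)/n) :=
              ENNReal.tsum_le_tsum hterm
          _ = (∑' j, g (j + m1)) * ENNReal.ofReal (C1 * (k n : ℝ)/n) := ENNReal.tsum_mul_right
          _ = ENNReal.ofReal (C1 * (k n : ℝ)/n) * ∑' j, g (j + m1) := mul_comm _ _
      calc ∑ i ∈ Finset.Icc 1 n, ∫⁻ ω, ∑' j : ℕ, ind i (j + m1) ω ∂μ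
          ≤ ∑ _i ∈ Finset.Icc 1 n, ENNReal.ofReal (C1 * (k n : ℝ)/n) * ∑' j, g (j + m1) :=
            Finset.sum_le_sum hone
        _ = (n : ℝ≥0∞) * (ENNReal.ofReal (C1 * (k n : ℝ)/n) * ∑' j, g (j + m1)) := by
            rw [Finset.sum_const, Nat.card_Icc]
            rw [show n + 1 - 1 = n from rfl]
            rw [nsmul_eq_mul]
        _ = ENNReal.ofReal (C1 * (k n : ℝ)) * ∑' j, g (j + m1) := by
            rw [← mul_assoc]
            congr 1
            rw [← ENNReal.ofReal_natCast n, ← ENNReal.ofReal_mul (Nat.cast_nonneg n)]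
            congr 1
            field_simp
    have hdivle : (∫⁻ ω, W ω ∂μ) / ENNReal.ofReal (η * k n)
        ≤ ENNReal.ofReal (C1/η) * ∑' j, g (j + m1) := by
      apply ENNReal.div_le_of_le_mul
      calc ∫⁻ ω, W ω ∂μ ≤ ENNReal.ofReal (C1 * (k n : ℝ)) * ∑' j, g (j + m1) := hlint
        _ = ENNReal.ofReal (C1/η) * (∑' j, g (j + m1)) * ENNReal.ofReal (η * k n) := by
            have hηne : η ≠ 0 := ne_of_gt hη
            have hsc : ENNReal.ofReal (C1 * (k n : ℝ))
                = ENNReal.ofReal (C1/η) * ENNReal.ofReal (η * (k n : ℝ)) := by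
              rw [← ENNReal.ofReal_mul (by positivity)]
              congr 1
              field_simp
            rw [hsc]
            ring
    calc μ {ω | η < T n M ω}
        ≤ μ ({ω | (((Finset.Icc 1 n).filter (fun i => u ≤ X i ω)).card : ℕ) < k n}
            ∪ {ω | ENNReal.ofReal (η * k n) ≤ W ω}) := measure_mono hsplit
      _ ≤ μ {ω | (((Finset.Icc 1 n).filter (fun i => u ≤ X i ω)).card : ℕ) < k n}
            + μ {ω | ENNReal.ofReal (η * k n) ≤ W ω} := measure_union_le _ _
      _ ≤ ENNReal.ofReal (C1/(4 * (k n : ℝ))) + ENNReal.ofReal (C1/η) * ∑' j, g (j + m1) :=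
          add_le_add hcheb (le_trans hmarkov hdivle)
  -- conclusion
  rw [ENNReal.tendsto_nhds_zero]
  intro ε hε
  have hhalf : (0:ℝ≥0∞) < ε/2 := ENNReal.half_pos hε.ne'
  have hcmul : Tendsto (fun m1 => ENNReal.ofReal (C1/η) * ∑' j, g (j + m1)) atTop (nhds 0) := by
    have h := ENNReal.Tendsto.const_mul (a := ENNReal.ofReal (C1/η)) hGt
      (Or.inr ENNReal.ofReal_ne_top)
    simpa using h
  obtain ⟨m1s, hm1s⟩ := eventually_atTop.mp (hcmul.eventually (Iic_mem_nhds hhalf))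
  have hkinv : Tendsto (fun n => ENNReal.ofReal (C1/(4 * (k n : ℝ)))) atTop (nhds 0) := by
    have h1 : Tendsto (fun n => ((k n:ℝ))⁻¹) atTop (nhds 0) :=
      (tendsto_natCast_atTop_atTop.comp hk).inv_tendsto_atTop
    have h2 : Tendsto (fun n => C1/(4*(k n:ℝ))) atTop (nhds 0) := by
      have h3 := h1.const_mul (C1/4)
      rw [mul_zero] at h3
      refine h3.congr (fun n => ?_)
      rw [div_eq_mul_inv C1 (4*(k n:ℝ)), mul_inv, div_eq_mul_inv, ← mul_assoc]
    have h4 := ENNReal.tendsto_ofReal (a := (0:ℝ)) h2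
    rwa [ENNReal.ofReal_zero] at h4
  filter_upwards [eventually_ge_atTop (Real.exp ((m1s:ℝ) + 1))] with M hM
  apply Filter.limsup_le_of_le (by isBoundedDefault)
  filter_upwards [hreg, hkinv.eventually (Iic_mem_nhds hhalf)] with n hregn hsmall
  calc μ {ω | η < T n M ω}
      ≤ ENNReal.ofReal (C1/(4 * (k n : ℝ))) + ENNReal.ofReal (C1/η) * ∑' j, g (j + m1s) :=
        key m1s M hM n hregn
    _ ≤ ε/2 + ε/2 := add_le_add hsmall (hm1s m1s le_rfl)
    _ = ε := ENNReal.add_halves ε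
end
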